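/- Let U be unitary on L²(E) where E is the set of oriented edges of a graph, and let T̂ be the antiunitary involution T̂|A,B⟩ = |B,A⟩ extended antilinearly. Then T̂UT̂ = U⁻¹ holds if and only if for every vertex A and all neighbors k, k′ of A, ⟨A,k|U|k′,A⟩ = ⟨A,k′|U|k,A⟩. -/

import Mathlib

open scoped ComplexConjugate

section Aux

variable {V : Type*} (Adj : V → V → Prop) (hsym : Symmetric Adj)

private def sw (e : {p : V × V // Adj p.1 p.2}) : {p : V × V // Adj p.1 p.2} :=
  ⟨(e.1.2, e.1.1), hsym e.2⟩

private lemma sw_sw : Function.Involutive (sw Adj hsym) := fun _ => rfl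

end Aux

/-- for a quantum walk on the oriented edges of a graph, with
`T̂ |A,B⟩ = |B,A⟩` extended antilinearly, the time-reversal condition
`T̂ U T̂ = U⁻¹` holds iff `⟨A,k|U|k′,A⟩ = ⟨A,k′|U|k,A⟩` for every vertex `A`
and all neighbors `k, k′` of `A`.  Here `U` maps the span of edges ending at a
vertex into the span of edges starting at that vertex (locality). -/
theorem stmt_13 {V : Type*} [Fintype V] [DecidableEq V]
    (Adj : V → V → Prop) [DecidableRel Adj] (hsym : Symmetric Adj)
    (U : EuclideanSpace ℂ {p : V × V // Adj p.1 p.2} ≃ₗᵢ[ℂ]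
         EuclideanSpace ℂ {p : V × V // Adj p.1 p.2})
    (δ : ∀ a b : V, Adj a b → EuclideanSpace ℂ {p : V × V // Adj p.1 p.2})
    (hδ : ∀ (a b : V) (h : Adj a b), δ a b h = EuclideanSpace.single ⟨(a, b), h⟩ 1)
    (T : EuclideanSpace ℂ {p : V × V // Adj p.1 p.2} →
         EuclideanSpace ℂ {p : V × V // Adj p.1 p.2})
    (hT : ∀ (f : EuclideanSpace ℂ {p : V × V // Adj p.1 p.2})
        (e : {p : V × V // Adj p.1 p.2}),
        T f e = starRingEnd ℂ (f ⟨(e.1.2, e.1.1), hsym e.2⟩))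
    (hloc : ∀ (B A : V) (hBA : Adj B A) (C D : V) (hCD : Adj C D), C ≠ A →
        U (δ B A hBA) ⟨(C, D), hCD⟩ = 0) :
    (∀ f, T (U (T f)) = U.symm f) ↔
      (∀ (A k k' : V) (hk : Adj k A) (hk' : Adj k' A),
        (inner ℂ (δ A k (hsym hk)) (U (δ k' A hk')) : ℂ) =
        (inner ℂ (δ A k' (hsym hk')) (U (δ k A hk)) : ℂ)) := by
  classical
  set M : {p : V × V // Adj p.1 p.2} → {p : V × V // Adj p.1 p.2} → ℂ :=
    fun e e' => (U (EuclideanSpace.single e' 1)) e with hMdef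
  -- T on basis vectors
  have hTs : ∀ e : {p : V × V // Adj p.1 p.2},
      T (EuclideanSpace.single e (1:ℂ)) = EuclideanSpace.single (sw Adj hsym e) 1 := by
    intro e
    ext x
    rw [hT]
    simp only [EuclideanSpace.single_apply]
    by_cases h : x = sw Adj hsym e
    · subst h
      have h2 : (⟨(((sw Adj hsym e).1).2, ((sw Adj hsym e).1).1), hsym (sw Adj hsym e).2⟩ :
          {p : V × V // Adj p.1 p.2}) = e := rfl
      simp [h2]
    · have h2 : (⟨((x.1).2, (x.1).1), hsym x.2⟩ : {p : V × V // Adj p.1 p.2}) ≠ e := by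
        intro hc
        apply h
        have h3 : sw Adj hsym x = e := hc
        rw [← h3]
        exact (sw_sw Adj hsym x).symm
      simp [h, h2]
  -- inner products as matrix entries
  have hinner : ∀ (A k k' : V) (hk : Adj k A) (hk' : Adj k' A),
      (inner ℂ (δ A k (hsym hk)) (U (δ k' A hk')) : ℂ)
        = M ⟨(A,k), hsym hk⟩ ⟨(k',A), hk'⟩ := by
    intro A k k' hk hk'
    rw [hδ, hδ, EuclideanSpace.inner_single_left]
    simp [hMdef]
  -- entries of U.symm
  have hsymm_entry : ∀ (f : EuclideanSpace ℂ {p : V × V // Adj p.1 p.2})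
      (e : {p : V × V // Adj p.1 p.2}),
      (U.symm f) e = ∑ e', (starRingEnd ℂ) (M e' e) * f e' := by
    intro f e
    have h1 : (U.symm f) e = (inner ℂ (EuclideanSpace.single e (1:ℂ)) (U.symm f) : ℂ) := by
      rw [EuclideanSpace.inner_single_left]; simp
    rw [h1, ← U.inner_map_map, U.apply_symm_apply, PiLp.inner_apply]
    simp [hMdef, RCLike.inner_apply]
    exact Finset.sum_congr rfl (fun _ _ => mul_comm _ _)
  constructor
  · -- forward
    intro H A k k' hk hk'
    rw [hinner A k k' hk hk', hinner A k' k hk' hk]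
    have h0 := H (EuclideanSpace.single ⟨(A,k'), hsym hk'⟩ (1:ℂ))
    rw [hTs] at h0
    have h1 := congrFun (congrArg WithLp.ofLp h0) ⟨(k,A), hk⟩
    rw [hT] at h1
    rw [hsymm_entry] at h1
    simp only [EuclideanSpace.single_apply, mul_ite, mul_one, mul_zero,
      Finset.sum_ite_eq', Finset.mem_univ, if_true] at h1
    -- h1 : conj (M ⟨(A,k)⟩ (sw ⟨(A,k')⟩)) = conj (M ⟨(A,k')⟩ ⟨(k,A)⟩)
    have := congrArg (starRingEnd ℂ) h1
    simp at this
    exact this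
  · -- reverse
    intro hS f
    have core : ∀ e e' : {p : V × V // Adj p.1 p.2},
        M (sw Adj hsym e) (sw Adj hsym e') = M e' e := by
      rintro ⟨⟨c,d⟩,hcd⟩ ⟨⟨a,b⟩,hab⟩
      by_cases h : a = d
      · subst h
        have := hS a c b hcd (hsym hab)
        rw [hinner a c b hcd (hsym hab), hinner a b c (hsym hab) hcd] at this
        exact this
      · have h1 := hloc b a (hsym hab) d c (hsym hcd) (fun hda => h hda.symm)
        have h2 := hloc c d hcd a b hab h
        rw [hδ] at h1
        rw [hδ] at h2
        simp only [hMdef]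
        exact h1.trans h2.symm
    ext e
    rw [hT]
    have hTf : T f = ∑ e', (starRingEnd ℂ) (f (sw Adj hsym e')) •
        EuclideanSpace.single e' (1:ℂ) := by
      ext x
      rw [hT]
      rw [WithLp.ofLp_sum, Finset.sum_apply]
      simp [EuclideanSpace.single_apply, Finset.sum_ite_eq', sw]
    have hUTf : (U (T f)) (sw Adj hsym e)
        = ∑ e', (starRingEnd ℂ) (f (sw Adj hsym e')) * M (sw Adj hsym e) e' := by
      rw [hTf, map_sum, WithLp.ofLp_sum, Finset.sum_apply]
      simp only [map_smul, PiLp.smul_apply, smul_eq_mul, hMdef]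
    have lhs : (starRingEnd ℂ) ((U (T f)) (sw Adj hsym e))
        = ∑ e', f e' * (starRingEnd ℂ) (M e' e) := by
      rw [hUTf, map_sum]
      have step : ∀ e' : {p : V × V // Adj p.1 p.2},
          (starRingEnd ℂ) ((starRingEnd ℂ) (f (sw Adj hsym e')) * M (sw Adj hsym e) e')
            = f (sw Adj hsym e') * (starRingEnd ℂ) (M (sw Adj hsym e) e') := by
        intro e'; rw [map_mul, RingHomCompTriple.comp_apply]; simp
      rw [Finset.sum_congr rfl (fun e' _ => step e')]
      refine Fintype.sum_equiv ((sw_sw Adj hsym).toPerm _) _ _ (fun x => ?_)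
      have hMx : M (sw Adj hsym e) x = M (sw Adj hsym x) e := by
        have hc := core e (sw Adj hsym x)
        rw [sw_sw Adj hsym x] at hc
        exact hc
      rw [hMx]
      simp only [Function.Involutive.coe_toPerm]
    have : (starRingEnd ℂ) ((U (T f)) ⟨((e.1).2, (e.1).1), hsym e.2⟩)
        = (starRingEnd ℂ) ((U (T f)) (sw Adj hsym e)) := rfl
    rw [this, lhs, hsymm_entry]
    exact Finset.sum_congr rfl (fun e' _ => mul_comm _ _)
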